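/- arXiv:2103.05893 — 2 statements merged into one kernel-verified Lean document; each statement's English description precedes it below -/
import Mathlib

section
/- Let η ∈ (0,1), let A be a real n×n matrix with spectral radius ρ(A), and let P̄ ⪰ 0. If η ρ(A)² < 1, then the series Σ_{k=0}^∞ η^k tr(f^k(P̄)) converges, where f(X) = A X Aᵀ + Q with Q ⪰ 0. -/
open Matrix
open scoped ENNReal NNReal

attribute [local instance] Matrix.linftyOpNormedRing Matrix.linftyOpNormedAlgebra

-- iterate formula
lemma aux_iter {n : ℕ} (A Q P : Matrix (Fin n) (Fin n) ℝ) (k : ℕ) :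
    (fun X => A * X * Aᵀ + Q)^[k] P
      = A ^ k * P * (Aᵀ) ^ k + ∑ j ∈ Finset.range k, A ^ j * Q * (Aᵀ) ^ j := by
  induction k with
  | zero => simp
  | succ k ih =>
      rw [Function.iterate_succ_apply', ih]
      simp only [mul_add, add_mul, Finset.mul_sum, Finset.sum_mul]
      rw [Finset.sum_range_succ' (fun j => A ^ j * Q * (Aᵀ) ^ j) k]
      simp only [pow_succ, pow_succ', mul_assoc, add_assoc]
      simp [← mul_assoc, pow_mul_comm']

-- trace of Sᵀ S
lemma aux_tr_sq {n : ℕ} (S : Matrix (Fin n) (Fin n) ℝ) :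
    (Sᵀ * S).trace = ∑ m, ∑ i, (S m i) ^ 2 := by
  rw [Finset.sum_comm]
  simp [Matrix.trace, Matrix.mul_apply, sq, Matrix.diag]

lemma aux_trace {n : ℕ} {X : Matrix (Fin n) (Fin n) ℝ} (hX : X.PosSemidef)
    (M : Matrix (Fin n) (Fin n) ℝ) :
    0 ≤ (M * X * Mᵀ).trace ∧
      (M * X * Mᵀ).trace ≤ X.trace * ∑ i, ∑ j, (M i j) ^ 2 := by
  obtain ⟨C, hC⟩ : ∃ C : Matrix (Fin n) (Fin n) ℝ, X = Cᴴ * C := by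
    open MatrixOrder in
    exact ⟨CFC.sqrt X, by
      rw [← Matrix.star_eq_conjTranspose, (CFC.sqrt_nonneg X).isSelfAdjoint.star_eq,
        CFC.sqrt_mul_sqrt_self X hX.nonneg]⟩
  have hC' : X = Cᵀ * C := by simpa using hC
  have key : (M * X * Mᵀ).trace = ((C * Mᵀ)ᵀ * (C * Mᵀ)).trace := by
    rw [hC', Matrix.transpose_mul, Matrix.transpose_transpose]
    rw [mul_assoc, mul_assoc, mul_assoc]
  have hXtr : X.trace = ∑ m, ∑ j, (C m j) ^ 2 := by
    rw [hC', aux_tr_sq]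
  rw [key, aux_tr_sq, hXtr]
  constructor
  · positivity
  · have h1 : ∀ m i, ((C * Mᵀ) m i) ^ 2 ≤ (∑ j, (C m j) ^ 2) * (∑ j, (M i j) ^ 2) := by
      intro m i
      have : (C * Mᵀ) m i = ∑ j, C m j * M i j := by
        simp [Matrix.mul_apply]
      rw [this]
      exact Finset.sum_mul_sq_le_sq_mul_sq _ _ _
    calc ∑ m, ∑ i, ((C * Mᵀ) m i) ^ 2
        ≤ ∑ m, ∑ i, (∑ j, (C m j) ^ 2) * (∑ j, (M i j) ^ 2) := by
          apply Finset.sum_le_sum; intro m _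
          apply Finset.sum_le_sum; intro i _
          exact h1 m i
      _ = (∑ m, ∑ j, (C m j) ^ 2) * ∑ i, ∑ j, (M i j) ^ 2 := by
          rw [← Finset.sum_mul_sum]

lemma aux_gelfand {n : ℕ} (hn : 0 < n) (A : Matrix (Fin n) (Fin n) ℝ) {r : ℝ}
    (hr : (spectralRadius ℂ (A.map (Complex.ofReal ·))).toReal < r) (hr1 : 1 ≤ r) :
    ∃ c : ℝ, 0 < c ∧ ∀ (k : ℕ) (i j : Fin n), |(A ^ k) i j| ≤ c * r ^ k := by
  haveI : Nonempty (Fin n) := ⟨⟨0, hn⟩⟩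
  set B := A.map (Complex.ofReal ·) with hB
  have hr0 : 0 < r := lt_of_lt_of_le one_pos hr1
  have hBpow : ∀ k : ℕ, B ^ k = (A ^ k).map (Complex.ofReal ·) := by
    intro k
    have hmm : ∀ M : Matrix (Fin n) (Fin n) ℝ,
        M.map (Complex.ofReal ·) = M.map Complex.ofRealHom := fun _ => rfl
    induction k with
    | zero => simp [hmm, Matrix.map_one]
    | succ k ih => rw [pow_succ, pow_succ, ih, hB, hmm, hmm, hmm, ← Matrix.map_mul]
  have hfin : spectralRadius ℂ B ≠ ⊤ :=
    ne_top_of_le_ne_top ENNReal.coe_ne_top (spectrum.spectralRadius_le_nnnorm (𝕜 := ℂ) B)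
  have hrlt : spectralRadius ℂ B < ENNReal.ofReal r := by
    rw [ENNReal.lt_ofReal_iff_toReal_lt hfin]; exact hr
  have T := spectrum.pow_nnnorm_pow_one_div_tendsto_nhds_spectralRadius B
  obtain ⟨N, hN⟩ := Filter.eventually_atTop.mp (T.eventually_lt_const hrlt)
  have key : ∀ k, N + 1 ≤ k → ‖B ^ k‖ ≤ r ^ k := by
    intro k hk
    have hk0 : (k : ℝ) ≠ 0 := Nat.cast_ne_zero.mpr (by omega)
    have h := hN k (by omega)
    have hx : ((‖B ^ k‖₊ : ℝ≥0∞) ^ (1 / (k : ℝ))) ^ (k : ℝ) = (‖B ^ k‖₊ : ℝ≥0∞) := by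
      rw [← ENNReal.rpow_mul, one_div, inv_mul_cancel₀ hk0, ENNReal.rpow_one]
    have h2 : (‖B ^ k‖₊ : ℝ≥0∞) ≤ (ENNReal.ofReal r) ^ (k : ℝ) := by
      rw [← hx]
      exact ENNReal.rpow_le_rpow h.le (Nat.cast_nonneg k)
    rw [ENNReal.ofReal_rpow_of_pos hr0, Real.rpow_natCast] at h2
    rw [← ENNReal.ofReal_coe_nnreal, coe_nnnorm] at h2
    exact (ENNReal.ofReal_le_ofReal_iff (by positivity)).mp h2
  refine ⟨1 + ∑ j ∈ Finset.range (N + 1), ‖B ^ j‖, by positivity, ?_⟩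
  have entry : ∀ (M : Matrix (Fin n) (Fin n) ℂ) (i j : Fin n), ‖M i j‖ ≤ ‖M‖ := by
    intro M i j
    have h1 : ‖M i j‖₊ ≤ ∑ l, ‖M i l‖₊ :=
      Finset.single_le_sum (f := fun l => ‖M i l‖₊) (fun _ _ => zero_le') (Finset.mem_univ j)
    have h2 : (∑ l, ‖M i l‖₊) ≤ Finset.univ.sup (fun i => ∑ l, ‖M i l‖₊) :=
      Finset.le_sup (f := fun i => ∑ l, ‖M i l‖₊) (Finset.mem_univ i)
    have h3 : ‖M i j‖₊ ≤ ‖M‖₊ := by rw [Matrix.linfty_opNNNorm_def]; exact h1.trans h2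
    exact h3
  intro k i j
  have hentry : |(A ^ k) i j| ≤ ‖B ^ k‖ := by
    have heq : (B ^ k) i j = ((A ^ k) i j : ℂ) := by rw [hBpow k]; rfl
    calc |(A ^ k) i j| = ‖(B ^ k) i j‖ := by
          rw [heq, Complex.norm_real, Real.norm_eq_abs]
      _ ≤ ‖B ^ k‖ := entry _ i j
  have hsum0 : 0 ≤ ∑ j ∈ Finset.range (N + 1), ‖B ^ j‖ :=
    Finset.sum_nonneg fun _ _ => norm_nonneg _
  rcases lt_or_ge k (N + 1) with h | h
  · have h1 : ‖B ^ k‖ ≤ ∑ j ∈ Finset.range (N + 1), ‖B ^ j‖ :=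
      Finset.single_le_sum (fun _ _ => norm_nonneg _) (Finset.mem_range.mpr h)
    have h2 : (1 : ℝ) ≤ r ^ k := one_le_pow₀ hr1
    nlinarith [norm_nonneg (B ^ k)]
  · have h1 := key k h
    have h2 : (0 : ℝ) < r ^ k := by positivity
    nlinarith

/-- If `η ∈ (0,1)` and `η ρ(A)² < 1`, then `Σ_k η^k tr(f^[k](P̄))` converges,
where `f(X) = A X Aᵀ + Q` with `Q, P̄ ⪰ 0`. -/
theorem stmt5 {n : ℕ} (A Q Pbar : Matrix (Fin n) (Fin n) ℝ)
    (hQ : Q.PosSemidef) (hPbar : Pbar.PosSemidef)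
    (η : ℝ) (hη : η ∈ Set.Ioo (0 : ℝ) 1)
    (hρ : η * ((spectralRadius ℂ (A.map (Complex.ofReal ·))).toReal) ^ 2 < 1) :
    Summable (fun k : ℕ => η ^ k * ((fun X => A * X * Aᵀ + Q)^[k] Pbar).trace) := by
  obtain ⟨hη0, hη1⟩ := hη
  rcases Nat.eq_zero_or_pos n with hn | hn
  · subst hn
    have h0 : ∀ k : ℕ, ((fun X => A * X * Aᵀ + Q)^[k] Pbar).trace = 0 := by
      intro k
      simp [Matrix.trace]
    simp only [h0, mul_zero]
    exact summable_zero
  set ρ := (spectralRadius ℂ (A.map (Complex.ofReal ·))).toReal with hρdef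
  have hρ0 : 0 ≤ ρ := ENNReal.toReal_nonneg
  have hs : max ρ 1 < Real.sqrt (1 / η) := by
    rw [max_lt_iff]
    refine ⟨(Real.lt_sqrt hρ0).mpr ?_, (Real.lt_sqrt zero_le_one).mpr ?_⟩
    · rw [lt_div_iff₀ hη0, mul_comm]
      exact hρ
    · rw [one_pow, lt_div_iff₀ hη0, one_mul]
      exact hη1
  set r := (max ρ 1 + Real.sqrt (1 / η)) / 2 with hrdef
  have hm1 : (1 : ℝ) ≤ max ρ 1 := le_max_right ρ 1
  have hmρ : ρ ≤ max ρ 1 := le_max_left ρ 1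
  have hr1 : 1 ≤ r := by rw [hrdef]; linarith
  have hr0 : 0 < r := lt_of_lt_of_le one_pos hr1
  have hρr : ρ < r := by rw [hrdef]; linarith
  have hrs : r < Real.sqrt (1 / η) := by rw [hrdef]; linarith
  have hηr2 : η * r ^ 2 < 1 := by
    have h1 : r ^ 2 < Real.sqrt (1 / η) ^ 2 := by nlinarith
    rw [Real.sq_sqrt (by positivity)] at h1
    rw [lt_div_iff₀ hη0] at h1
    linarith [h1]
  obtain ⟨c, hc0, hc⟩ := aux_gelfand hn A hρr hr1
  clear_value ρ r
  -- trace nonnegativity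
  have htrP : 0 ≤ Pbar.trace := by
    have h := (aux_trace hPbar (1 : Matrix (Fin n) (Fin n) ℝ)).1
    simpa using h
  have htrQ : 0 ≤ Q.trace := by
    have h := (aux_trace hQ (1 : Matrix (Fin n) (Fin n) ℝ)).1
    simpa using h
  -- entrywise square sum bound
  have hE : ∀ j : ℕ, (∑ i, ∑ l, ((A ^ j) i l) ^ 2) ≤ (n : ℝ) ^ 2 * c ^ 2 * r ^ (2 * j) := by
    intro j
    have h1 : ∀ i l : Fin n, ((A ^ j) i l) ^ 2 ≤ (c * r ^ j) ^ 2 := by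
      intro i l
      have := hc j i l
      nlinarith [abs_nonneg ((A ^ j) i l), sq_abs ((A ^ j) i l)]
    calc (∑ i, ∑ l, ((A ^ j) i l) ^ 2)
        ≤ ∑ _i : Fin n, ∑ _l : Fin n, (c * r ^ j) ^ 2 := by
          refine Finset.sum_le_sum fun i _ => Finset.sum_le_sum fun l _ => h1 i l
      _ = (n : ℝ) ^ 2 * c ^ 2 * r ^ (2 * j) := by
          simp only [Finset.sum_const, Finset.card_univ, Fintype.card_fin, nsmul_eq_mul]
          rw [pow_mul]
          ring
  -- the trace of the iterate, bounded
  set d := (n : ℝ) ^ 2 * c ^ 2 with hddef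
  have hd0 : 0 < d := by
    have : 0 < (n : ℝ) := Nat.cast_pos.mpr hn
    positivity
  clear_value d
  have hTpos : ∀ k : ℕ, 0 ≤ ((fun X => A * X * Aᵀ + Q)^[k] Pbar).trace := by
    intro k
    rw [aux_iter, Matrix.trace_add, Matrix.trace_sum]
    have h1 : 0 ≤ (A ^ k * Pbar * (Aᵀ) ^ k).trace := by
      have := (aux_trace hPbar (A ^ k)).1
      rwa [Matrix.transpose_pow] at this
    have h2 : 0 ≤ ∑ j ∈ Finset.range k, (A ^ j * Q * (Aᵀ) ^ j).trace := by
      refine Finset.sum_nonneg fun j _ => ?_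
      have := (aux_trace hQ (A ^ j)).1
      rwa [Matrix.transpose_pow] at this
    linarith
  have hTbound : ∀ k : ℕ, ((fun X => A * X * Aᵀ + Q)^[k] Pbar).trace
      ≤ (Pbar.trace + (k : ℝ) * Q.trace) * d * r ^ (2 * k) := by
    intro k
    rw [aux_iter, Matrix.trace_add, Matrix.trace_sum]
    have h1 : (A ^ k * Pbar * (Aᵀ) ^ k).trace ≤ Pbar.trace * (d * r ^ (2 * k)) := by
      have h := (aux_trace hPbar (A ^ k)).2
      rw [Matrix.transpose_pow] at h
      exact h.trans (mul_le_mul_of_nonneg_left (hE k) htrP)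
    have h2 : ∀ j, j ∈ Finset.range k →
        (A ^ j * Q * (Aᵀ) ^ j).trace ≤ Q.trace * (d * r ^ (2 * k)) := by
      intro j hj
      have h := (aux_trace hQ (A ^ j)).2
      rw [Matrix.transpose_pow] at h
      have hjk : r ^ (2 * j) ≤ r ^ (2 * k) := by
        refine pow_le_pow_right₀ hr1 ?_
        have := Finset.mem_range.mp hj
        omega
      have hE' : (∑ i, ∑ l, ((A ^ j) i l) ^ 2) ≤ d * r ^ (2 * k) := by
        refine (hE j).trans ?_
        nlinarith
      exact h.trans (mul_le_mul_of_nonneg_left hE' htrQ)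
    have h3 : ∑ j ∈ Finset.range k, (A ^ j * Q * (Aᵀ) ^ j).trace
        ≤ (k : ℝ) * (Q.trace * (d * r ^ (2 * k))) := by
      calc ∑ j ∈ Finset.range k, (A ^ j * Q * (Aᵀ) ^ j).trace
          ≤ ∑ _j ∈ Finset.range k, Q.trace * (d * r ^ (2 * k)) :=
            Finset.sum_le_sum h2
        _ = (k : ℝ) * (Q.trace * (d * r ^ (2 * k))) := by
            simp [Finset.sum_const, Finset.card_range, nsmul_eq_mul]
    nlinarith [h1, h3]
  -- comparison series
  set s := η * r ^ 2 with hsdef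
  have hs0 : 0 ≤ s := by positivity
  clear_value s
  have hsum : Summable (fun k : ℕ =>
      Pbar.trace * d * s ^ k + Q.trace * d * ((k : ℝ) * s ^ k)) := by
    have s1 : Summable fun k : ℕ => s ^ k := summable_geometric_of_lt_one hs0 hηr2
    have s2 : Summable fun k : ℕ => (k : ℝ) * s ^ k := by
      have := summable_pow_mul_geometric_of_norm_lt_one 1
        (r := s) (by rw [Real.norm_eq_abs, abs_of_nonneg hs0]; exact hηr2)
      simpa using this
    exact (s1.mul_left _).add (s2.mul_left _)
  refine Summable.of_norm_bounded hsum ?_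
  intro k
  have hT0 := hTpos k
  have hTb := hTbound k
  have hηk : (0:ℝ) ≤ η ^ k := by positivity
  rw [Real.norm_eq_abs, abs_of_nonneg (mul_nonneg hηk hT0)]
  have hpow : s ^ k = η ^ k * r ^ (2 * k) := by
    rw [hsdef, mul_pow, pow_mul]
  have step : η ^ k * ((fun X => A * X * Aᵀ + Q)^[k] Pbar).trace
      ≤ η ^ k * ((Pbar.trace + (k : ℝ) * Q.trace) * d * r ^ (2 * k)) :=
    mul_le_mul_of_nonneg_left hTb hηk
  refine step.trans (le_of_eq ?_)
  rw [hpow]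
  ring
end

section
/- Let f(X) = AXAᵀ + Q with Q ≻ 0 and suppose (1 − λ_a) ρ(A)² < η for η ∈ (0,1), λ_a ∈ (0,1). For the Markov chain τ_k on ℕ where P(τ_{k+1} = τ_k + 1) = 1 − λ_a and P(τ_{k+1} = 0) = λ_a, and any symmetric M ⪰ 0, the discounted sum Σ_{k=0}^∞ η^k E[tr(M f^{τ_k}(P̄))] is finite for any fixed initial state τ_0 and P̄ ⪰ 0. -/
open Matrix Filter

section helpers
attribute [local instance] Matrix.frobeniusNormedAddCommGroup Matrix.frobeniusNormedSpace
  Matrix.frobeniusNormedRing Matrix.frobeniusNormedAlgebra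

private lemma frob_entry_le {n : ℕ} (B : Matrix (Fin n) (Fin n) ℝ) (i j : Fin n) :
    ‖B i j‖ ≤ ‖B‖ := by
  rw [Matrix.frobenius_norm_def]
  have h1 : ‖B i j‖ ^ (2:ℝ) ≤ ∑ i', ∑ j', ‖B i' j'‖ ^ (2:ℝ) := by
    calc ‖B i j‖ ^ (2:ℝ) ≤ ∑ j', ‖B i j'‖ ^ (2:ℝ) :=
          Finset.single_le_sum (fun _ _ => Real.rpow_nonneg (norm_nonneg _) _) (Finset.mem_univ j)
      _ ≤ ∑ i', ∑ j', ‖B i' j'‖ ^ (2:ℝ) :=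
          Finset.single_le_sum
            (fun _ _ => Finset.sum_nonneg fun _ _ => Real.rpow_nonneg (norm_nonneg _) _)
            (Finset.mem_univ i)
  calc ‖B i j‖ = (‖B i j‖ ^ (2:ℝ)) ^ ((1:ℝ)/2) := by
        rw [← Real.rpow_mul (norm_nonneg _)]; norm_num
    _ ≤ (∑ i', ∑ j', ‖B i' j'‖ ^ (2:ℝ)) ^ ((1:ℝ)/2) :=
        Real.rpow_le_rpow (Real.rpow_nonneg (norm_nonneg _) _) h1 (by norm_num)

private lemma trace_abs_le {n : ℕ} (B : Matrix (Fin n) (Fin n) ℝ) : |B.trace| ≤ n * ‖B‖ := by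
  calc |B.trace| = |∑ i, B i i| := by rw [Matrix.trace]; rfl
    _ ≤ ∑ i : Fin n, |B i i| := Finset.abs_sum_le_sum_abs _ _
    _ ≤ ∑ _i : Fin n, ‖B‖ := Finset.sum_le_sum fun i _ => frob_entry_le B i i
    _ = n * ‖B‖ := by simp [Finset.sum_const, mul_comm]

private lemma iterate_form {n : ℕ} (A Q Pbar : Matrix (Fin n) (Fin n) ℝ) (j : ℕ) :
    (fun X => A * X * Aᵀ + Q)^[j] Pbar
      = A^j * Pbar * (Aᵀ)^j + ∑ i ∈ Finset.range j, A^i * Q * (Aᵀ)^i := by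
  induction j with
  | zero => simp
  | succ j ih =>
    have h : ∀ (X : Matrix (Fin n) (Fin n) ℝ) (i : ℕ),
        A * (A^i * X * Aᵀ^i) * Aᵀ = A^(i+1) * X * Aᵀ^(i+1) := by
      intro X i; rw [pow_succ', pow_succ]; simp only [mul_assoc]
    rw [Function.iterate_succ_apply', ih]
    simp only [mul_add, add_mul, Finset.mul_sum, Finset.sum_mul, h, Finset.sum_range_succ']
    simp [add_assoc]

private lemma pow_norm_bound {n : ℕ} (A : Matrix (Fin n) (Fin n) ℝ) (s : ℝ) (hs : 0 < s)
    (hρ : (spectralRadius ℂ (A.map (Complex.ofReal ·))).toReal < s) :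
    ∃ C : ℝ, 1 ≤ C ∧ ∀ j, ‖A ^ j‖ ≤ C * s ^ j := by
  set B : Matrix (Fin n) (Fin n) ℂ := A.map (Complex.ofReal ·) with hB
  have hnormeq : ∀ j : ℕ, ‖B ^ j‖ = ‖A ^ j‖ := by
    intro j
    have h1 : B ^ j = (A ^ j).map (Complex.ofReal ·) := by
      have : B = Complex.ofRealHom.mapMatrix A := rfl
      rw [this, ← map_pow]; rfl
    rw [h1]
    exact Matrix.frobenius_norm_map_eq _ _ fun a => Complex.norm_real a
  have hne : spectralRadius ℂ B ≠ ⊤ := by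
    refine ne_top_of_le_ne_top ?_ (spectrum.spectralRadius_le_pow_nnnorm_pow_one_div ℂ B 0)
    exact (ENNReal.mul_lt_top
      (ENNReal.rpow_lt_top_of_nonneg (by norm_num) ENNReal.coe_ne_top)
      (ENNReal.rpow_lt_top_of_nonneg (by norm_num) ENNReal.coe_ne_top)).ne
  have hlt : spectralRadius ℂ B < ENNReal.ofReal s := by
    rw [← ENNReal.ofReal_toReal hne]
    exact (ENNReal.ofReal_lt_ofReal_iff hs).mpr hρ
  have hgel := spectrum.pow_norm_pow_one_div_tendsto_nhds_spectralRadius B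
  have hev : ∀ᶠ m : ℕ in atTop, ENNReal.ofReal (‖B ^ m‖ ^ (1 / (m:ℝ))) < ENNReal.ofReal s :=
    hgel.eventually_lt_const hlt
  obtain ⟨N, hN⟩ := eventually_atTop.mp hev
  have hpow : ∀ m, N + 1 ≤ m → ‖A ^ m‖ ≤ s ^ m := by
    intro m hm
    have hm1 : 1 ≤ m := le_trans (Nat.le_add_left 1 N) hm
    have h1 := hN m (le_trans (Nat.le_succ N) hm)
    have h2 : ‖B ^ m‖ ^ (1 / (m:ℝ)) < s :=
      (ENNReal.ofReal_lt_ofReal_iff_of_nonneg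
        (Real.rpow_nonneg (norm_nonneg _) _)).mp h1
    have hm0 : (m:ℝ) ≠ 0 := by exact_mod_cast (by omega : m ≠ 0)
    have h3 : ‖B ^ m‖ = (‖B ^ m‖ ^ (1 / (m:ℝ))) ^ m := by
      rw [← Real.rpow_natCast (‖B ^ m‖ ^ (1 / (m:ℝ))) m, ← Real.rpow_mul (norm_nonneg _),
        one_div, inv_mul_cancel₀ hm0, Real.rpow_one]
    rw [← hnormeq, h3]
    exact le_of_lt (pow_lt_pow_left₀ h2 (Real.rpow_nonneg (norm_nonneg _) _) (by omega))
  refine ⟨1 + ∑ i ∈ Finset.range (N + 1), ‖A ^ i‖ / s ^ i, ?_, ?_⟩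
  · have : 0 ≤ ∑ i ∈ Finset.range (N + 1), ‖A ^ i‖ / s ^ i :=
      Finset.sum_nonneg fun i _ => div_nonneg (norm_nonneg _) (pow_nonneg hs.le _)
    linarith
  · intro j
    have hspos : (0:ℝ) < s ^ j := pow_pos hs j
    rcases le_or_gt (N + 1) j with hj | hj
    · calc ‖A ^ j‖ ≤ s ^ j := hpow j hj
        _ ≤ (1 + ∑ i ∈ Finset.range (N + 1), ‖A ^ i‖ / s ^ i) * s ^ j := by
            nlinarith [Finset.sum_nonneg fun i (_ : i ∈ Finset.range (N+1)) =>
              div_nonneg (norm_nonneg (A ^ i)) (pow_nonneg hs.le i)]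
    · have hmem : j ∈ Finset.range (N + 1) := Finset.mem_range.mpr hj
      have h1 : ‖A ^ j‖ / s ^ j ≤ ∑ i ∈ Finset.range (N + 1), ‖A ^ i‖ / s ^ i :=
        Finset.single_le_sum (f := fun i => ‖A ^ i‖ / s ^ i)
          (fun i _ => div_nonneg (norm_nonneg _) (pow_nonneg hs.le _)) hmem
      rw [div_le_iff₀ hspos] at h1
      nlinarith

-- the trace bound
private lemma trace_bound {n : ℕ} (A Q Pbar M : Matrix (Fin n) (Fin n) ℝ)
    (s : ℝ) (hs : 0 < s) (C : ℝ) (hC1 : 1 ≤ C) (hC : ∀ j, ‖A ^ j‖ ≤ C * s ^ j)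
    (u : ℝ) (hu1 : 1 ≤ u) (hus : s ^ 2 ≤ u) (j : ℕ) :
    |(M * (fun X => A * X * Aᵀ + Q)^[j] Pbar).trace|
      ≤ (n * ‖M‖ * (C^2 * (‖Pbar‖ + ‖Q‖))) * ((j:ℝ)+1) * u ^ j := by
  have hC0 : 0 < C := lt_of_lt_of_le one_pos hC1
  have hu0 : 0 < u := lt_of_lt_of_le one_pos hu1
  have hterm : ∀ i : ℕ, i ≤ j → ∀ X : Matrix (Fin n) (Fin n) ℝ,
      ‖A ^ i * X * (Aᵀ) ^ i‖ ≤ C^2 * ‖X‖ * u ^ j := by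
    intro i hij X
    have hT : ‖(Aᵀ) ^ i‖ = ‖A ^ i‖ := by
      rw [← Matrix.transpose_pow]; exact Matrix.frobenius_norm_transpose _
    have h1 : ‖A ^ i * X * (Aᵀ) ^ i‖ ≤ ‖A ^ i‖ * ‖X‖ * ‖(Aᵀ) ^ i‖ :=
      le_trans (norm_mul_le _ _) (by
        have := norm_mul_le (A ^ i) X
        nlinarith [norm_nonneg ((Aᵀ) ^ i), norm_nonneg (A ^ i), norm_nonneg X])
    have h2 : ‖A ^ i‖ ≤ C * s ^ i := hC i
    have hsu : (s^2) ^ i ≤ u ^ j := by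
      calc (s^2) ^ i ≤ u ^ i := pow_le_pow_left₀ (sq_nonneg s) hus i
        _ ≤ u ^ j := pow_le_pow_right₀ hu1 hij
    have hsi : (0:ℝ) ≤ s ^ i := pow_nonneg hs.le i
    calc ‖A ^ i * X * (Aᵀ) ^ i‖ ≤ ‖A ^ i‖ * ‖X‖ * ‖(Aᵀ) ^ i‖ := h1
      _ = ‖A ^ i‖ * ‖A ^ i‖ * ‖X‖ := by rw [hT]; ring
      _ ≤ (C * s ^ i) * (C * s ^ i) * ‖X‖ :=
          mul_le_mul_of_nonneg_right
            (mul_le_mul h2 h2 (norm_nonneg _) (by positivity)) (norm_nonneg X)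
      _ = C^2 * ‖X‖ * (s^2) ^ i := by rw [← pow_mul, pow_mul']; ring
      _ ≤ C^2 * ‖X‖ * u ^ j := mul_le_mul_of_nonneg_left hsu (by positivity)
  have hnorm : ‖(fun X => A * X * Aᵀ + Q)^[j] Pbar‖
      ≤ C^2 * (‖Pbar‖ + (j:ℝ) * ‖Q‖) * u ^ j := by
    rw [iterate_form]
    calc ‖A^j * Pbar * (Aᵀ)^j + ∑ i ∈ Finset.range j, A^i * Q * (Aᵀ)^i‖
        ≤ ‖A^j * Pbar * (Aᵀ)^j‖ + ‖∑ i ∈ Finset.range j, A^i * Q * (Aᵀ)^i‖ := norm_add_le _ _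
      _ ≤ ‖A^j * Pbar * (Aᵀ)^j‖ + ∑ i ∈ Finset.range j, ‖A^i * Q * (Aᵀ)^i‖ := by
          gcongr; exact norm_sum_le _ _
      _ ≤ C^2 * ‖Pbar‖ * u ^ j + ∑ i ∈ Finset.range j, C^2 * ‖Q‖ * u ^ j := by
          gcongr with i hi
          · exact hterm j le_rfl Pbar
          · exact hterm i (Nat.le_of_lt_succ (Nat.lt_succ_of_lt (Finset.mem_range.mp hi))) Q
      _ = C^2 * (‖Pbar‖ + (j:ℝ) * ‖Q‖) * u ^ j := by
          rw [Finset.sum_const, Finset.card_range]; push_cast; ring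
  calc |(M * (fun X => A * X * Aᵀ + Q)^[j] Pbar).trace|
      ≤ n * ‖M * (fun X => A * X * Aᵀ + Q)^[j] Pbar‖ := trace_abs_le _
    _ ≤ n * (‖M‖ * ‖(fun X => A * X * Aᵀ + Q)^[j] Pbar‖) := by
        gcongr; exact norm_mul_le _ _
    _ ≤ n * (‖M‖ * (C^2 * (‖Pbar‖ + (j:ℝ) * ‖Q‖) * u ^ j)) := by
        gcongr
    _ = ((n:ℝ) * ‖M‖ * C^2) * ((‖Pbar‖ + (j:ℝ) * ‖Q‖) * u ^ j) := by ring
    _ ≤ ((n:ℝ) * ‖M‖ * C^2) * ((((j:ℝ)+1) * (‖Pbar‖ + ‖Q‖)) * u ^ j) := by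
        have hupj : (0:ℝ) ≤ u ^ j := pow_nonneg hu0.le j
        have hj0 : (0:ℝ) ≤ (j:ℝ) := Nat.cast_nonneg j
        have key : ‖Pbar‖ + (j:ℝ) * ‖Q‖ ≤ ((j:ℝ)+1) * (‖Pbar‖ + ‖Q‖) := by
          nlinarith [norm_nonneg Pbar, norm_nonneg Q]
        exact mul_le_mul_of_nonneg_left
          (mul_le_mul_of_nonneg_right key hupj) (by positivity)
    _ = (n * ‖M‖ * (C^2 * (‖Pbar‖ + ‖Q‖))) * ((j:ℝ)+1) * u ^ j := by ring

/-- Boundedness of the expected discounted cost under constant attack: if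
`(1−λ_a) ρ(A)² < η` then `Σ_k η^k E[tr(M f^{τ_k}(P̄))]` is finite, where the
holding time chain `τ_k` resets to `0` w.p. `λ_a` and increments w.p. `1−λ_a`,
so that `E[tr(M f^{τ_k}(P̄))] = Σ_{j<k} λ_a(1−λ_a)^j tr(M f^[j](P̄))
+ (1−λ_a)^k tr(M f^[τ₀+k](P̄))`. -/
theorem stmt17 {n : ℕ} (A Q Pbar M : Matrix (Fin n) (Fin n) ℝ)
    (hQ : Q.PosDef) (hPbar : Pbar.PosSemidef) (hM : M.PosSemidef)
    (η lamA : ℝ) (hη : η ∈ Set.Ioo (0 : ℝ) 1) (hlam : lamA ∈ Set.Ioo (0 : ℝ) 1)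
    (hcond : (1 - lamA) * ((spectralRadius ℂ (A.map (Complex.ofReal ·))).toReal) ^ 2 < η)
    (τ0 : ℕ) :
    Summable (fun k : ℕ => η ^ k *
      ((∑ j ∈ Finset.range k, lamA * (1 - lamA) ^ j
          * (M * (fun X => A * X * Aᵀ + Q)^[j] Pbar).trace)
        + (1 - lamA) ^ k * (M * (fun X => A * X * Aᵀ + Q)^[τ0 + k] Pbar).trace)) := by
  obtain ⟨hη0, hη1⟩ := hη
  obtain ⟨hl0, hl1⟩ := hlam
  have h1l : 0 < 1 - lamA := by linarith
  set ρt := (spectralRadius ℂ (A.map (Complex.ofReal ·))).toReal with hρt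
  have hρt0 : 0 ≤ ρt := ENNReal.toReal_nonneg
  clear_value ρt
  have hρη : ρt ^ 2 < η / (1 - lamA) := by rw [lt_div_iff₀ h1l, mul_comm]; exact hcond
  have hdivpos : 0 < η / (1 - lamA) := div_pos hη0 h1l
  have hargpos : 0 < (ρt ^ 2 + η / (1 - lamA)) / 2 := by nlinarith [sq_nonneg ρt]
  set s := Real.sqrt ((ρt ^ 2 + η / (1 - lamA)) / 2) with hsdef
  have hs0 : 0 < s := Real.sqrt_pos.mpr hargpos
  have hs2 : s ^ 2 = (ρt ^ 2 + η / (1 - lamA)) / 2 := Real.sq_sqrt hargpos.le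
  clear_value s
  have hρs : ρt < s := by nlinarith
  have hsη : (1 - lamA) * s ^ 2 < η := by
    have hc : (1 - lamA) * (η / (1 - lamA)) = η := by field_simp
    nlinarith [hcond]
  obtain ⟨C, hC1, hC⟩ := pow_norm_bound A s hs0 (by rw [← hρt]; exact hρs)
  set u := max 1 (s ^ 2) with hu
  have hu1 : (1:ℝ) ≤ u := le_max_left _ _
  have hus : s ^ 2 ≤ u := le_max_right _ _
  have hu0 : (0:ℝ) < u := lt_of_lt_of_le one_pos hu1
  have huseq : (1 - lamA) * u < 1 := by
    rcases le_total (s ^ 2) 1 with h | h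
    · rw [hu, max_eq_left h]; linarith
    · rw [hu, max_eq_right h]; linarith
  clear_value u
  set K := (n:ℝ) * ‖M‖ * (C ^ 2 * (‖Pbar‖ + ‖Q‖)) with hK
  have hC0 : (0:ℝ) < C := lt_of_lt_of_le one_pos hC1
  have hK0 : 0 ≤ K := by positivity
  have htb : ∀ j, |(M * (fun X => A * X * Aᵀ + Q)^[j] Pbar).trace|
      ≤ K * ((j:ℝ) + 1) * u ^ j := fun j =>
    trace_bound A Q Pbar M s hs0 C hC1 hC u hu1 hus j
  clear_value K
  set v := (1 - lamA) * u with hv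
  have hv0 : 0 ≤ v := mul_nonneg h1l.le hu0.le
  have hv1 : v < 1 := huseq
  clear_value v
  set w := η * v with hwdef
  have hw0 : 0 ≤ w := mul_nonneg hη0.le hv0
  have hw1 : w < 1 := lt_of_le_of_lt (mul_le_of_le_one_left hv0 hη1.le) hv1
  clear_value w
  have hSv : Summable (fun j : ℕ => ((j:ℝ) + 1) * v ^ j) := by
    have h1 : Summable (fun j : ℕ => (j:ℝ) ^ 1 * v ^ j) :=
      summable_pow_mul_geometric_of_norm_lt_one 1
        (by rw [Real.norm_eq_abs, abs_of_nonneg hv0]; exact hv1)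
    have h0 : Summable (fun j : ℕ => v ^ j) := summable_geometric_of_lt_one hv0 hv1
    exact (h1.add h0).congr fun j => by push_cast; ring
  set Sv := ∑' j : ℕ, ((j:ℝ) + 1) * v ^ j with hSvdef
  have hSv0 : 0 ≤ Sv :=
    tsum_nonneg fun j => mul_nonneg (by positivity) (pow_nonneg hv0 j)
  have hpartial : ∀ k, ∑ j ∈ Finset.range k, ((j:ℝ) + 1) * v ^ j ≤ Sv := fun k =>
    hSv.sum_le_tsum _ (fun j _ => mul_nonneg (by positivity) (pow_nonneg hv0 j))
  clear_value Sv
  have hg : Summable (fun k : ℕ =>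
      lamA * K * Sv * η ^ k + K * u ^ τ0 * (((τ0:ℝ) + (k:ℝ) + 1) * w ^ k)) := by
    have hgeo : Summable (fun k : ℕ => η ^ k) := summable_geometric_of_lt_one hη0.le hη1
    have h1 : Summable (fun k : ℕ => (k:ℝ) ^ 1 * w ^ k) :=
      summable_pow_mul_geometric_of_norm_lt_one 1
        (by rw [Real.norm_eq_abs, abs_of_nonneg hw0]; exact hw1)
    have h0 : Summable (fun k : ℕ => w ^ k) := summable_geometric_of_lt_one hw0 hw1
    have h2 : Summable (fun k : ℕ => ((τ0:ℝ) + (k:ℝ) + 1) * w ^ k) :=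
      ((h0.mul_left ((τ0:ℝ) + 1)).add h1).congr fun k => by push_cast; ring
    exact (hgeo.mul_left _).add (h2.mul_left _)
  refine Summable.of_norm_bounded hg ?_
  intro k
  rw [Real.norm_eq_abs]
  have hηk : (0:ℝ) ≤ η ^ k := pow_nonneg hη0.le k
  have hl1k : (0:ℝ) ≤ (1 - lamA) ^ k := pow_nonneg h1l.le k
  have hS1 : |∑ j ∈ Finset.range k, lamA * (1 - lamA) ^ j
      * (M * (fun X => A * X * Aᵀ + Q)^[j] Pbar).trace| ≤ lamA * K * Sv := by
    calc |∑ j ∈ Finset.range k, lamA * (1 - lamA) ^ j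
          * (M * (fun X => A * X * Aᵀ + Q)^[j] Pbar).trace|
        ≤ ∑ j ∈ Finset.range k, |lamA * (1 - lamA) ^ j
          * (M * (fun X => A * X * Aᵀ + Q)^[j] Pbar).trace| :=
          Finset.abs_sum_le_sum_abs _ _
      _ ≤ ∑ j ∈ Finset.range k, lamA * (1 - lamA) ^ j * (K * ((j:ℝ) + 1) * u ^ j) := by
          refine Finset.sum_le_sum fun j _ => ?_
          rw [abs_mul, abs_of_nonneg (mul_nonneg hl0.le (pow_nonneg h1l.le j))]
          exact mul_le_mul_of_nonneg_left (htb j)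
            (mul_nonneg hl0.le (pow_nonneg h1l.le j))
      _ = lamA * K * ∑ j ∈ Finset.range k, ((j:ℝ) + 1) * v ^ j := by
          rw [Finset.mul_sum]
          exact Finset.sum_congr rfl fun j _ => by rw [hv, mul_pow]; ring
      _ ≤ lamA * K * Sv :=
          mul_le_mul_of_nonneg_left (hpartial k) (mul_nonneg hl0.le hK0)
  have hS2 : |(1 - lamA) ^ k * (M * (fun X => A * X * Aᵀ + Q)^[τ0 + k] Pbar).trace|
      ≤ K * u ^ τ0 * (((τ0:ℝ) + (k:ℝ) + 1) * v ^ k) := by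
    rw [abs_mul, abs_of_nonneg hl1k]
    calc (1 - lamA) ^ k * |(M * (fun X => A * X * Aᵀ + Q)^[τ0 + k] Pbar).trace|
        ≤ (1 - lamA) ^ k * (K * (((τ0 + k : ℕ):ℝ) + 1) * u ^ (τ0 + k)) :=
          mul_le_mul_of_nonneg_left (htb (τ0 + k)) hl1k
      _ = K * u ^ τ0 * (((τ0:ℝ) + (k:ℝ) + 1) * v ^ k) := by
          rw [hv, pow_add, mul_pow]; push_cast; ring
  have hwk : w ^ k = η ^ k * v ^ k := by rw [hwdef, mul_pow]
  calc |η ^ k * ((∑ j ∈ Finset.range k, lamA * (1 - lamA) ^ j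
          * (M * (fun X => A * X * Aᵀ + Q)^[j] Pbar).trace)
        + (1 - lamA) ^ k * (M * (fun X => A * X * Aᵀ + Q)^[τ0 + k] Pbar).trace)|
      = η ^ k * |(∑ j ∈ Finset.range k, lamA * (1 - lamA) ^ j
          * (M * (fun X => A * X * Aᵀ + Q)^[j] Pbar).trace)
        + (1 - lamA) ^ k * (M * (fun X => A * X * Aᵀ + Q)^[τ0 + k] Pbar).trace| := by
        rw [abs_mul, abs_of_nonneg hηk]
    _ ≤ η ^ k * (|∑ j ∈ Finset.range k, lamA * (1 - lamA) ^ j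
          * (M * (fun X => A * X * Aᵀ + Q)^[j] Pbar).trace|
        + |(1 - lamA) ^ k * (M * (fun X => A * X * Aᵀ + Q)^[τ0 + k] Pbar).trace|) :=
        mul_le_mul_of_nonneg_left (abs_add_le _ _) hηk
    _ ≤ η ^ k * (lamA * K * Sv + K * u ^ τ0 * (((τ0:ℝ) + (k:ℝ) + 1) * v ^ k)) :=
        mul_le_mul_of_nonneg_left (add_le_add hS1 hS2) hηk
    _ = lamA * K * Sv * η ^ k + K * u ^ τ0 * (((τ0:ℝ) + (k:ℝ) + 1) * w ^ k) := by
        rw [hwk]; ring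

end helpers
end
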